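/- If H is an Ore-composition of graphs H1 and H2 and at least one of H1, H2 is isomorphic to K4, then T(H) ≥ T(H1) + T(H2) − 1, where T(G) denotes the maximum number of vertex-disjoint cycles of length at most four in G. -/

import Mathlib

open SimpleGraph

/-- A graph is 4-critical if it is not 3-colorable but every proper subgraph is 3-colorable. -/
def FourCritical {V : Type*} (G : SimpleGraph V) : Prop :=
  ¬ G.Colorable 3 ∧ ∀ H : SimpleGraph V, H < G → H.Colorable 3

/-- `S` is the vertex set of a cycle of length at most four in `G`. -/
def ShortCycleSet {V : Type*} (G : SimpleGraph V) (S : Set V) : Prop :=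
  ∃ (v : V) (w : G.Walk v v), w.IsCycle ∧ w.length ≤ 4 ∧ {x | x ∈ w.support} = S

/-- `maxTri G` (the quantity `T(G)` of the paper) is the maximum number of pairwise
vertex-disjoint cycles of length at most four in `G`. -/
noncomputable def maxTri {V : Type*} (G : SimpleGraph V) : ℕ :=
  sSup {n | ∃ C : Finset (Set V), C.card = n ∧ (∀ S ∈ C, ShortCycleSet G S) ∧
    (C : Set (Set V)).Pairwise Disjoint}

/-- The potential `p(G) = 5|V(G)| - 3|E(G)| - T(G)`. -/
noncomputable def pot {V : Type*} (G : SimpleGraph V) : ℤ :=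
  5 * (Nat.card V : ℤ) - 3 * (Nat.card G.edgeSet : ℤ) - (maxTri G : ℤ)

/-- The graph obtained by the Ore composition of `G₁` (edge side, replaced edge `xy`) and
`G₂` (split side, split vertex `z`, with `A` the set of neighbours of `z` assigned to the
copy `z₁` identified with `x`). -/
def oreGraph {V₁ V₂ : Type*} (G₁ : SimpleGraph V₁) (x y : V₁) (G₂ : SimpleGraph V₂)
    (z : V₂) (A : Set V₂) : SimpleGraph (V₁ ⊕ {v : V₂ // v ≠ z}) :=
  SimpleGraph.fromRel (fun a b =>
    match a, b with
    | Sum.inl a, Sum.inl b => G₁.Adj a b ∧ ¬(a = x ∧ b = y) ∧ ¬(a = y ∧ b = x)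
    | Sum.inr a, Sum.inr b => G₂.Adj a.1 b.1
    | Sum.inl a, Sum.inr b => G₂.Adj z b.1 ∧ ((a = x ∧ b.1 ∈ A) ∨ (a = y ∧ b.1 ∉ A))
    | Sum.inr _, Sum.inl _ => False)

/-- `H` is an Ore composition of `G₁` and `G₂`: an edge `xy` of `G₁` is deleted, a vertex `z`
of `G₂` is split into two vertices of positive degree, which are identified with `x` and `y`. -/
def IsOreComposition {V₁ V₂ V₃ : Type*} (H : SimpleGraph V₃) (G₁ : SimpleGraph V₁)
    (G₂ : SimpleGraph V₂) : Prop :=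
  ∃ (x y : V₁) (z : V₂) (A : Set V₂), G₁.Adj x y ∧
    (A ∩ G₂.neighborSet z).Nonempty ∧ ((G₂.neighborSet z) \ A).Nonempty ∧
    Nonempty (H ≃g oreGraph G₁ x y G₂ z A)

/-- The 4-Ore graphs on vertex sets `Fin n`: obtained from copies of `K₄` by
repeated Ore compositions. -/
inductive FourOreAux : ∀ {n : ℕ}, SimpleGraph (Fin n) → Prop
  | k4 : FourOreAux (⊤ : SimpleGraph (Fin 4))
  | ore {n₁ n₂ n : ℕ} {G₁ : SimpleGraph (Fin n₁)} {G₂ : SimpleGraph (Fin n₂)}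
      {G : SimpleGraph (Fin n)} :
      FourOreAux G₁ → FourOreAux G₂ → IsOreComposition G G₁ G₂ → FourOreAux G

/-- A graph is 4-Ore if it is isomorphic to a 4-Ore graph on some `Fin n`. -/
def IsFourOre {V : Type*} (H : SimpleGraph V) : Prop :=
  ∃ (n : ℕ) (G : SimpleGraph (Fin n)), FourOreAux G ∧ Nonempty (H ≃g G)

/-- `G` contains `K₄` minus an edge as a subgraph (vertices `a,b` of degree three in it). -/
def HasK4MinusE {V : Type*} (G : SimpleGraph V) : Prop :=
  ∃ a b c d : V, a ≠ b ∧ a ≠ c ∧ a ≠ d ∧ b ≠ c ∧ b ≠ d ∧ c ≠ d ∧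
    G.Adj a b ∧ G.Adj a c ∧ G.Adj a d ∧ G.Adj b c ∧ G.Adj b d

/-- `a,b,c,d` form a diamond of `H`: a subgraph isomorphic to `K₄ - e` (with `a,b` its
degree-three vertices) such that `a` and `b` also have degree three in `H`. -/
def IsDiamond {V : Type*} (H : SimpleGraph V) (a b c d : V) : Prop :=
  a ≠ b ∧ a ≠ c ∧ a ≠ d ∧ b ≠ c ∧ b ≠ d ∧ c ≠ d ∧
  H.Adj a b ∧ H.Adj a c ∧ H.Adj a d ∧ H.Adj b c ∧ H.Adj b d ∧
  (H.neighborSet a).ncard = 3 ∧ (H.neighborSet b).ncard = 3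

/-- Splitting the vertex `v` of `G` into two vertices `Sum.inr 0` and `Sum.inr 1`, the
neighbours of `v` in `A` going to the first and the remaining neighbours to the second. -/
def splitGraph {V : Type*} (G : SimpleGraph V) (v : V) (A : Set V) :
    SimpleGraph ({u : V // u ≠ v} ⊕ Fin 2) :=
  SimpleGraph.fromRel (fun a b =>
    match a, b with
    | Sum.inl a, Sum.inl b => G.Adj a.1 b.1
    | Sum.inl a, Sum.inr i => G.Adj v a.1 ∧ ((i = 0 ∧ a.1 ∈ A) ∨ (i = 1 ∧ a.1 ∉ A))
    | _, _ => False)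

/-- The graph `T₈` of the paper. -/
def T8 : SimpleGraph (Fin 8) :=
  SimpleGraph.fromRel (fun a b => (a, b) ∈
    ([(0,1),(1,2),(2,0),(0,3),(3,6),(6,7),(7,3),(2,4),(4,6),(6,5),(5,1),(4,7),(7,5)] :
      List (Fin 8 × Fin 8)))

/-- The graph `T₁₁` of the paper. -/
def T11 : SimpleGraph (Fin 11) :=
  SimpleGraph.fromRel (fun a b => (a, b) ∈
    ([(0,8),(8,10),(10,9),(9,1),(8,9),(10,1),(1,2),(2,0),(0,3),(3,6),(6,7),(7,3),
      (2,4),(4,6),(6,5),(5,1),(4,7),(7,5)] : List (Fin 11 × Fin 11)))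

/-- The wheel `W₅`: a 5-cycle `0,…,4` together with a hub `5` adjacent to all of it. -/
def W5 : SimpleGraph (Fin 6) :=
  SimpleGraph.fromRel (fun a b => (a, b) ∈
    ([(0,1),(1,2),(2,3),(3,4),(4,0),(5,0),(5,1),(5,2),(5,3),(5,4)] : List (Fin 6 × Fin 6)))

/-- The exceptional 4-critical graphs: `K₄`, `H₇` (the 4-Ore graph on seven vertices),
`W₅`, `T₈`, `T₁₁`, and the 4-Ore graphs with `T = 3`. -/
def Exceptional {V : Type*} (G : SimpleGraph V) : Prop :=
  Nonempty (G ≃g (⊤ : SimpleGraph (Fin 4))) ∨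
  (∃ H₇ : SimpleGraph (Fin 7), IsFourOre H₇ ∧ Nonempty (G ≃g H₇)) ∨
  Nonempty (G ≃g W5) ∨ Nonempty (G ≃g T8) ∨ Nonempty (G ≃g T11) ∨
  (IsFourOre G ∧ maxTri G = 3)

/-- `G` is a minimum counterexample to the main theorem: a 4-critical graph with
`p(G) ≥ -1` which is not exceptional, such that every 4-critical graph on fewer vertices
satisfies the conclusion of the main theorem. -/
def MinCounterexample {V : Type*} (G : SimpleGraph V) : Prop :=
  FourCritical G ∧ -1 ≤ pot G ∧ ¬ Exceptional G ∧
  ∀ m : ℕ, m < Nat.card V → ∀ H : SimpleGraph (Fin m), FourCritical H →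
    Exceptional H ∨ pot H ≤ -2

/-- The φ-identification `G_φ(R)`: the color classes of `R` are identified to the three
vertices `Sum.inr i`, which form a triangle. -/
def identGraph {V : Type*} (G : SimpleGraph V) (R : Set V) (φ : V → Fin 3) :
    SimpleGraph ({v : V // v ∉ R} ⊕ Fin 3) :=
  SimpleGraph.fromRel (fun a b =>
    match a, b with
    | Sum.inl a, Sum.inl b => G.Adj a.1 b.1
    | Sum.inl a, Sum.inr i => ∃ r ∈ R, φ r = i ∧ G.Adj a.1 r
    | Sum.inr _, Sum.inr _ => True
    | Sum.inr _, Sum.inl _ => False)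

section OreAux

variable {α β : Type*} {G : SimpleGraph α} {G' : SimpleGraph β}

private lemma exists_walk_map (f : α → β) {u v : α} (w : G.Walk u v)
    (hadj : ∀ a ∈ w.support, ∀ b ∈ w.support, G.Adj a b → G'.Adj (f a) (f b)) :
    ∃ w' : G'.Walk (f u) (f v), w'.support = w.support.map f ∧
      w'.length = w.length ∧ w'.edges = w.edges.map (Sym2.map f) := by
  induction w with
  | nil => exact ⟨Walk.nil, by simp⟩
  | @cons u w v h p ih =>
      obtain ⟨w', h1, h2, h3⟩ := ih (fun a ha b hb => hadj a (by simp [ha]) b (by simp [hb]))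
      exact ⟨Walk.cons (hadj u (by simp) w (by simp) h) w', by simp [h1], by simp [h2],
        by simp [h3]⟩

private lemma shortCycleSet_map (f : α → β) {S : Set α} (hS : ShortCycleSet G S)
    (hinj : S.InjOn f)
    (hadj : ∀ a ∈ S, ∀ b ∈ S, G.Adj a b → G'.Adj (f a) (f b)) :
    ShortCycleSet G' (f '' S) := by
  obtain ⟨v, w, hcyc, hlen, hsup⟩ := hS
  have hmem : ∀ a ∈ w.support, a ∈ S := fun a ha => hsup ▸ ha
  obtain ⟨w', h1, h2, h3⟩ := exists_walk_map f w
    (fun a ha b hb => hadj a (hmem a ha) b (hmem b hb))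
  refine ⟨f v, w', ?_, h2 ▸ hlen, ?_⟩
  · constructor
    · constructor
      · rw [Walk.isTrail_def, h3]
        refine hcyc.isTrail.edges_nodup.map_on ?_
        intro e he e' he' hee
        induction e with | _ a b =>
        induction e' with | _ c d =>
        simp only [Sym2.map_pair_eq, Sym2.eq_iff] at hee ⊢
        have ha := hmem a (w.fst_mem_support_of_mem_edges he)
        have hb := hmem b (w.snd_mem_support_of_mem_edges he)
        have hc := hmem c (w.fst_mem_support_of_mem_edges he')
        have hd := hmem d (w.snd_mem_support_of_mem_edges he')
        rcases hee with ⟨e1, e2⟩ | ⟨e1, e2⟩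
        · exact Or.inl ⟨hinj ha hc e1, hinj hb hd e2⟩
        · exact Or.inr ⟨hinj ha hd e1, hinj hb hc e2⟩
      · intro hn
        have := hcyc.three_le_length
        rw [hn] at h2
        simp at h2
        omega
    · rw [h1]
      have : (w.support.map f).tail = w.support.tail.map f := by
        cases w.support <;> simp
      rw [this]
      refine hcyc.support_nodup.map_on ?_
      intro x hx y hy
      exact hinj (hmem x (List.mem_of_mem_tail hx)) (hmem y (List.mem_of_mem_tail hy))
  · rw [← hsup]
    ext b
    simp [h1, List.mem_map]

private lemma triangle_short {a b c : α} (hab : G.Adj a b) (hbc : G.Adj b c)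
    (hca : G.Adj c a) : ShortCycleSet G {a, b, c} := by
  refine ⟨a, Walk.cons hab (Walk.cons hbc (Walk.cons hca Walk.nil)), ?_, by simp, ?_⟩
  · constructor
    · constructor
      · rw [Walk.isTrail_def]
        simp [hab.ne, hbc.ne, hca.ne, hab.ne', hbc.ne', hca.ne', Sym2.eq_iff]
      · simp
    · simp [hab.ne, hbc.ne, hca.ne', Ne.symm]
  · ext x; simp; tauto

private lemma shortCycle_finite {S : Set α} (hS : ShortCycleSet G S) : S.Finite := by
  obtain ⟨v, w, _, _, hsup⟩ := hS
  rw [← hsup]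
  exact (w.support.finite_toSet).subset (by intro x; simp)

private lemma three_le_ncard {S : Set α} (hS : ShortCycleSet G S) : 3 ≤ S.ncard := by
  classical
  obtain ⟨v, w, hcyc, hle, hsup⟩ := hS
  have h1 : (w.support.tail.toFinset : Set α) ⊆ S := by
    intro x hx
    rw [← hsup]
    simp only [List.coe_toFinset, Set.mem_setOf_eq] at hx ⊢
    exact List.mem_of_mem_tail hx
  calc (3:ℕ) ≤ w.support.tail.length := by
        have := hcyc.three_le_length
        rw [Walk.support_eq_cons]; simp [Walk.length_support] at *; omega
    _ = w.support.tail.toFinset.card := (List.toFinset_card_of_nodup hcyc.support_nodup).symm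
    _ = (w.support.tail.toFinset : Set α).ncard := (Set.ncard_coe_finset _).symm
    _ ≤ S.ncard := Set.ncard_le_ncard h1 (shortCycle_finite ⟨v, w, hcyc, hle, hsup⟩)

/-- The defining set of `maxTri`. -/
private def triSet (G : SimpleGraph α) : Set ℕ :=
  {n | ∃ C : Finset (Set α), C.card = n ∧ (∀ S ∈ C, ShortCycleSet G S) ∧
    (C : Set (Set α)).Pairwise Disjoint}

private lemma maxTri_eq_sSup (G : SimpleGraph α) : maxTri G = sSup (triSet G) := rfl

private lemma zero_mem_triSet (G : SimpleGraph α) : 0 ∈ triSet G := ⟨∅, by simp⟩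

private lemma image_injOn_subsets {f : α → β} {t : Set α} (hf : Set.InjOn f t) :
    ∀ S ⊆ t, ∀ S' ⊆ t, f '' S = f '' S' → S = S' := by
  intro S hS S' hS' h
  ext a
  constructor
  · intro ha
    have : f a ∈ f '' S' := h ▸ ⟨a, ha, rfl⟩
    obtain ⟨b, hb, hba⟩ := this
    rwa [← hf (hS' hb) (hS ha) hba]
  · intro ha
    have : f a ∈ f '' S := h.symm ▸ ⟨a, ha, rfl⟩
    obtain ⟨b, hb, hba⟩ := this
    rwa [← hf (hS hb) (hS' ha) hba]

private lemma disjoint_image_of_injOn' {f : α → β} {t S S' : Set α} (hf : Set.InjOn f t)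
    (hS : S ⊆ t) (hS' : S' ⊆ t) (h : Disjoint S S') : Disjoint (f '' S) (f '' S') := by
  rw [Set.disjoint_left]
  rintro y ⟨a, ha, rfl⟩ ⟨b, hb, hba⟩
  have : b = a := hf (hS' hb) (hS ha) hba
  subst this
  exact (Set.disjoint_left.mp h ha) hb

open scoped Classical in
private lemma mem_triSet_image {f : α → β} {t : Set α} (hf : Set.InjOn f t)
    (hadj : ∀ a ∈ t, ∀ b ∈ t, G.Adj a b → G'.Adj (f a) (f b))
    {C : Finset (Set α)} (hC : ∀ S ∈ C, ShortCycleSet G S) (hsub : ∀ S ∈ C, S ⊆ t)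
    (hdisj : (C : Set (Set α)).Pairwise Disjoint) :
    (C.image (Set.image f)).card = C.card ∧
      (∀ S ∈ C.image (Set.image f), ShortCycleSet G' S) ∧
      ((C.image (Set.image f) : Set (Set β))).Pairwise Disjoint := by
  refine ⟨Finset.card_image_of_injOn ?_, ?_, ?_⟩
  · intro S hS S' hS' h
    exact image_injOn_subsets hf S (hsub S hS) S' (hsub S' hS') h
  · intro S hS
    simp only [Finset.mem_image] at hS
    obtain ⟨S₀, hS₀, rfl⟩ := hS
    exact shortCycleSet_map f (hC S₀ hS₀) (hf.mono (hsub S₀ hS₀))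
      (fun a ha b hb hab => hadj a (hsub S₀ hS₀ ha) b (hsub S₀ hS₀ hb) hab)
  · intro S hS S' hS' hne
    simp only [Finset.coe_image, Set.mem_image, Finset.mem_coe] at hS hS'
    obtain ⟨S₀, hS₀, rfl⟩ := hS
    obtain ⟨S₀', hS₀', rfl⟩ := hS'
    have hne₀ : S₀ ≠ S₀' := fun h => hne (by rw [h])
    exact disjoint_image_of_injOn' hf (hsub _ hS₀) (hsub _ hS₀') (hdisj hS₀ hS₀' hne₀)

private lemma triSet_subset_of_inj (f : α → β) (hf : Function.Injective f)
    (hadj : ∀ a b, G.Adj a b → G'.Adj (f a) (f b)) : triSet G ⊆ triSet G' := by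
  classical
  rintro n ⟨C, rfl, hC, hdisj⟩
  obtain ⟨h1, h2, h3⟩ := mem_triSet_image (t := Set.univ) (fun a _ b _ hab => hf hab)
    (fun a _ b _ hab => hadj a b hab) hC (fun S _ => S.subset_univ) hdisj
  exact ⟨C.image (Set.image f), h1, h2, h3⟩

private lemma maxTri_eq_of_iso (e : G ≃g G') : maxTri G = maxTri G' := by
  rw [maxTri_eq_sSup, maxTri_eq_sSup]
  congr 1
  apply Set.Subset.antisymm
  · exact triSet_subset_of_inj e e.injective (fun a b hab => e.map_adj_iff.mpr hab)
  · exact triSet_subset_of_inj e.symm e.symm.injective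
      (fun a b hab => e.symm.map_adj_iff.mpr hab)

private lemma csSup_le_csSup_nat {s t : Set ℕ} (k : ℕ) (h0 : 0 ∈ s)
    (fwd : ∀ n ∈ s, ∃ m ∈ t, n ≤ m) (bwd : ∀ n ∈ t, ∃ m ∈ s, n ≤ m + k) :
    sSup s ≤ sSup t := by
  by_cases ht : BddAbove t
  · have hs : BddAbove s := by
      obtain ⟨b, hb⟩ := ht
      refine ⟨b, fun n hn => ?_⟩
      obtain ⟨m, hm, hnm⟩ := fwd n hn
      exact le_trans hnm (hb hm)
    have hmem := Nat.sSup_mem ⟨0, h0⟩ hs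
    obtain ⟨m, hm, hnm⟩ := fwd _ hmem
    exact le_trans hnm (le_csSup ht hm)
  · have hs : ¬BddAbove s := by
      rintro ⟨b, hb⟩
      refine ht ⟨b + k, fun n hn => ?_⟩
      obtain ⟨m, hm, hnm⟩ := bwd n hn
      have := hb hm
      omega
    rw [csSup_of_not_bddAbove hs, csSup_of_not_bddAbove ht]

open scoped Classical in
private lemma card_filter_inter_le [Nonempty α] {C : Finset (Set α)}
    (hdisj : (C : Set (Set α)).Pairwise Disjoint) (t : Set α) (ht : t.Finite) :
    (C.filter (fun S => (S ∩ t).Nonempty)).card ≤ t.ncard := by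
  set g : Set α → α := fun S => if h : (S ∩ t).Nonempty then h.choose else Classical.arbitrary α
    with hg
  have hgmem : ∀ S, (h : (S ∩ t).Nonempty) → g S ∈ S ∩ t := by
    intro S h
    simp only [hg, dif_pos h]
    exact h.choose_spec
  rw [Set.ncard_eq_toFinset_card _ ht]
  refine Finset.card_le_card_of_injOn g ?_ ?_
  · intro S hS
    rw [Finset.mem_coe, Finset.mem_filter] at hS
    have := hgmem S hS.2
    rw [Finset.mem_coe, Set.Finite.mem_toFinset]
    exact this.2
  · intro S hS S' hS' hgss
    simp only [Finset.coe_filter, Set.mem_setOf_eq] at hS hS'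
    by_contra hne
    have h1 := hgmem S hS.2
    have h2 := hgmem S' hS'.2
    rw [hgss] at h1
    exact (Set.disjoint_left.mp (hdisj hS.1 hS'.1 hne) h1.1) h2.1

private lemma maxTri_top_fin4 : maxTri (⊤ : SimpleGraph (Fin 4)) = 1 := by
  have h1 : 1 ∈ triSet (⊤ : SimpleGraph (Fin 4)) := by
    refine ⟨{({0, 1, 2} : Set (Fin 4))}, Finset.card_singleton _, ?_, ?_⟩
    · intro S hS
      rw [Finset.mem_singleton] at hS
      subst hS
      exact triangle_short (by simp) (by decide) (by decide)
    · simp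
  have hb : ∀ n ∈ triSet (⊤ : SimpleGraph (Fin 4)), n ≤ 1 := by
    rintro n ⟨C, rfl, hC, hdisj⟩
    by_contra hn
    obtain ⟨S, hS, S', hS', hne⟩ := (Finset.one_lt_card (s := C)).mp (by omega)
    have h3 := three_le_ncard (hC S hS)
    have h3' := three_le_ncard (hC S' hS')
    have hd := hdisj hS hS' hne
    have hu : (S ∪ S').ncard ≤ 4 := by
      calc (S ∪ S').ncard ≤ (Set.univ : Set (Fin 4)).ncard :=
            Set.ncard_le_ncard (Set.subset_univ _) Set.finite_univ
        _ = 4 := by rw [Set.ncard_univ]; simp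
    rw [Set.ncard_union_eq hd (shortCycle_finite (hC S hS))
      (shortCycle_finite (hC S' hS'))] at hu
    omega
  rw [maxTri_eq_sSup]
  exact le_antisymm (csSup_le ⟨1, h1⟩ hb) (le_csSup ⟨1, hb⟩ h1)

end OreAux
section OreMain

variable {V₁ V₂ : Type*} {G₁ : SimpleGraph V₁} {x y : V₁} {G₂ : SimpleGraph V₂} {z : V₂}
  {A : Set V₂}

private lemma ore_adj_inr {u u' : {v : V₂ // v ≠ z}} (h : G₂.Adj u.1 u'.1) :
    (oreGraph G₁ x y G₂ z A).Adj (Sum.inr u) (Sum.inr u') := by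
  rw [oreGraph, fromRel_adj]
  exact ⟨by simp [Subtype.ext_iff, h.ne], Or.inl h⟩

private lemma ore_adj_inr' {u u' : {v : V₂ // v ≠ z}}
    (h : (oreGraph G₁ x y G₂ z A).Adj (Sum.inr u) (Sum.inr u')) : G₂.Adj u.1 u'.1 := by
  rw [oreGraph, fromRel_adj] at h
  exact h.2.elim id fun h' => h'.symm

private lemma ore_adj_inl {a b : V₁} (h : G₁.Adj a b) (h1 : ¬(a = x ∧ b = y))
    (h2 : ¬(a = y ∧ b = x)) :
    (oreGraph G₁ x y G₂ z A).Adj (Sum.inl a) (Sum.inl b) := by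
  rw [oreGraph, fromRel_adj]
  exact ⟨by simp [h.ne], Or.inl ⟨h, h1, h2⟩⟩

private lemma ore_adj_inl' {a b : V₁}
    (h : (oreGraph G₁ x y G₂ z A).Adj (Sum.inl a) (Sum.inl b)) : G₁.Adj a b := by
  rw [oreGraph, fromRel_adj] at h
  rcases h.2 with ⟨h', _⟩ | ⟨h', _⟩
  · exact h'
  · exact h'.symm

private lemma iso_symm_ne {α : Type*} {G : SimpleGraph α}
    (e : G ≃g (⊤ : SimpleGraph (Fin 4))) {a : Fin 4} {u : α} (h : a ≠ e u) :
    e.symm a ≠ u := by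
  intro hc
  apply h
  rw [← hc, RelIso.apply_symm_apply]

private lemma iso_symm_ne' {α : Type*} {G : SimpleGraph α}
    (e : G ≃g (⊤ : SimpleGraph (Fin 4))) {a b : Fin 4} (h : a ≠ b) :
    e.symm a ≠ e.symm b := by
  intro hc
  apply h
  rw [← RelIso.apply_symm_apply e a, hc, RelIso.apply_symm_apply]

private lemma top4_adj {α : Type*} {G : SimpleGraph α}
    (e : G ≃g (⊤ : SimpleGraph (Fin 4))) {u v : α} (h : u ≠ v) : G.Adj u v := by
  rw [← e.map_adj_iff]
  simp only [top_adj, ne_eq]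
  exact fun hc => h (e.injective hc)

private lemma maxTri_le_ore_split (hxy : G₁.Adj x y)
    (e : G₁ ≃g (⊤ : SimpleGraph (Fin 4))) :
    maxTri G₂ ≤ maxTri (oreGraph G₁ x y G₂ z A) := by
  classical
  haveI : Nonempty V₂ := ⟨z⟩
  haveI : Finite V₁ := Finite.intro e.toEquiv
  set O := oreGraph G₁ x y G₂ z A with hO
  -- choose c, d distinct from x, y and each other
  have hcd : ∃ c d : V₁, c ≠ d ∧ c ≠ x ∧ c ≠ y ∧ d ≠ x ∧ d ≠ y := by
    have hcard2 : ({e x, e y} : Finset (Fin 4)).card ≤ 2 :=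
      le_trans (Finset.card_insert_le _ _) (by simp)
    have hcards : 1 < (Finset.univ \ ({e x, e y} : Finset (Fin 4))).card := by
      rw [Finset.card_sdiff_of_subset (Finset.subset_univ _)]
      simp only [Finset.card_univ, Fintype.card_fin]
      omega
    obtain ⟨a, ha, b, hb, hab⟩ := Finset.one_lt_card.mp hcards
    simp only [Finset.mem_sdiff, Finset.mem_univ, true_and, Finset.mem_insert,
      Finset.mem_singleton, not_or] at ha hb
    exact ⟨e.symm a, e.symm b, iso_symm_ne' e hab, iso_symm_ne e ha.1, iso_symm_ne e ha.2,
      iso_symm_ne e hb.1, iso_symm_ne e hb.2⟩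
  obtain ⟨c, d, hcd', hcx, hcy, hdx, hdy⟩ := hcd
  set T : Set (V₁ ⊕ {v : V₂ // v ≠ z}) := {Sum.inl x, Sum.inl c, Sum.inl d} with hT
  have hTshort : ShortCycleSet O T :=
    triangle_short
      (ore_adj_inl (top4_adj e (Ne.symm hcx)) (fun h => hcy h.2) (fun h => hxy.ne h.1))
      (ore_adj_inl (top4_adj e hcd') (fun h => hcx h.1) (fun h => hcy h.1))
      (ore_adj_inl (top4_adj e hdx) (fun h => hxy.ne h.2) (fun h => hdy h.1))
  rw [maxTri_eq_sSup, maxTri_eq_sSup]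
  refine csSup_le_csSup_nat (Set.range (Sum.inl : V₁ → V₁ ⊕ {v : V₂ // v ≠ z})).ncard
    (zero_mem_triSet _) ?_ ?_
  · -- forward: a family in G₂ yields a bigger family in O
    rintro n ⟨C, rfl, hC, hdisj⟩
    set f : V₂ → V₁ ⊕ {v : V₂ // v ≠ z} :=
      fun v => if h : v = z then Sum.inl x else Sum.inr ⟨v, h⟩ with hf
    have hfval : ∀ (v) (h : v ≠ z), f v = Sum.inr ⟨v, h⟩ := fun v h => dif_neg h
    have hinj : Set.InjOn f {v | v ≠ z} := by
      intro a ha b hb hab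
      rw [hfval a ha, hfval b hb] at hab
      exact congrArg Subtype.val (Sum.inr.inj hab)
    have hadjf : ∀ a ∈ {v | v ≠ z}, ∀ b ∈ {v | v ≠ z}, G₂.Adj a b → O.Adj (f a) (f b) := by
      intro a ha b hb hab
      rw [hfval a ha, hfval b hb]
      exact ore_adj_inr hab
    set C₀ := C.filter (fun S => z ∉ S) with hC₀
    have hsub : ∀ S ∈ C₀, S ⊆ {v | v ≠ z} := by
      intro S hS v hv
      rw [hC₀, Finset.mem_filter] at hS
      exact fun hvz => hS.2 (hvz ▸ hv)
    obtain ⟨h1, h2, h3⟩ := mem_triSet_image hinj hadjf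
      (fun S hS => hC S (Finset.mem_filter.mp hS).1) hsub
      (hdisj.mono (Finset.coe_subset.mpr (Finset.filter_subset _ C)))
    set D := C₀.image (Set.image f) with hD
    have hTD : T ∉ D := by
      intro hTD
      rw [hD, Finset.mem_image] at hTD
      obtain ⟨S, hS, hST⟩ := hTD
      have : Sum.inl x ∈ f '' S := by rw [hST, hT]; left; rfl
      obtain ⟨a, ha, hfa⟩ := this
      rw [hfval a (hsub S hS ha)] at hfa
      exact Sum.inr_ne_inl hfa
    have hdisjT : ∀ S ∈ D, Disjoint T S := by
      intro S hS
      rw [hD, Finset.mem_image] at hS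
      obtain ⟨S₀, hS₀, rfl⟩ := hS
      rw [Set.disjoint_left]
      rintro v hv ⟨a, ha, rfl⟩
      rw [hfval a (hsub S₀ hS₀ ha)] at hv
      rw [hT] at hv
      rcases hv with hv | hv | hv <;> simp [hf] at hv
    refine ⟨(insert T D).card, ⟨insert T D, rfl, ?_, ?_⟩, ?_⟩
    · intro S hS
      rcases Finset.mem_insert.mp hS with rfl | hS
      · exact hTshort
      · exact h2 S hS
    · rw [Finset.coe_insert]
      exact Set.pairwise_insert_of_symmetric.mpr
        ⟨h3, fun S hS _ => hdisjT S hS⟩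
    · rw [Finset.card_insert_of_notMem hTD, h1]
      have hsubf : C.filter (fun S => z ∈ S) ⊆
          C.filter (fun S => (S ∩ ({z} : Set V₂)).Nonempty) := by
        intro S hS
        rw [Finset.mem_filter] at hS ⊢
        exact ⟨hS.1, ⟨z, hS.2, rfl⟩⟩
      have hcount := le_trans (Finset.card_le_card hsubf)
        (card_filter_inter_le hdisj ({z} : Set V₂) (Set.finite_singleton z))
      rw [Set.ncard_singleton] at hcount
      have hsum := Finset.card_filter_add_card_filter_not (s := C)
        (p := fun S => z ∈ S)
      omega
  · -- backward: a family in O yields a family in G₂, up to the vertices of V₁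
    rintro n ⟨C, rfl, hC, hdisj⟩
    haveI : Nonempty (V₁ ⊕ {v : V₂ // v ≠ z}) := ⟨Sum.inl x⟩
    have ht : (Set.range (Sum.inl : V₁ → V₁ ⊕ {v : V₂ // v ≠ z})).Finite :=
      Set.finite_range _
    set f' : V₁ ⊕ {v : V₂ // v ≠ z} → V₂ := Sum.elim (fun _ => z) Subtype.val with hf'
    set t := Set.range (Sum.inr : {v : V₂ // v ≠ z} → V₁ ⊕ {v : V₂ // v ≠ z}) with htdef
    have hinj : Set.InjOn f' t := by
      rintro a ⟨u, rfl⟩ b ⟨u', rfl⟩ hab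
      simp only [hf', Sum.elim_inr] at hab
      rw [Subtype.ext hab]
    have hadjf : ∀ a ∈ t, ∀ b ∈ t, O.Adj a b → G₂.Adj (f' a) (f' b) := by
      rintro a ⟨u, rfl⟩ b ⟨u', rfl⟩ hab
      simpa [hf'] using ore_adj_inr' hab
    set C₀ := C.filter (fun S => S ⊆ t) with hC₀
    obtain ⟨h1, h2, h3⟩ := mem_triSet_image hinj hadjf
      (fun S hS => hC S (Finset.mem_filter.mp hS).1)
      (fun S hS => (Finset.mem_filter.mp hS).2)
      (hdisj.mono (Finset.coe_subset.mpr (Finset.filter_subset _ C)))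
    refine ⟨C₀.card, ⟨C₀.image (Set.image f'), h1, h2, h3⟩, ?_⟩
    have hbad : C.filter (fun S => ¬ S ⊆ t) ⊆
        C.filter (fun S => (S ∩ Set.range (Sum.inl : V₁ → _)).Nonempty) := by
      intro S hS
      rw [Finset.mem_filter] at hS ⊢
      refine ⟨hS.1, ?_⟩
      obtain ⟨a, ha, hat⟩ := Set.not_subset.mp hS.2
      cases a with
      | inl v => exact ⟨Sum.inl v, ha, ⟨v, rfl⟩⟩
      | inr u => exact absurd ⟨u, rfl⟩ hat
    have hb2 := card_filter_inter_le hdisj (Set.range (Sum.inl : V₁ → _)) ht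
    have hb3 := Finset.card_le_card hbad
    have hsum := Finset.card_filter_add_card_filter_not (s := C)
      (p := fun S => S ⊆ t)
    have hlink : C₀.card = (C.filter (fun S => S ⊆ t)).card := congrArg Finset.card hC₀
    omega

private lemma maxTri_le_ore_edge (hxy : G₁.Adj x y)
    (e : G₂ ≃g (⊤ : SimpleGraph (Fin 4))) :
    maxTri G₁ ≤ maxTri (oreGraph G₁ x y G₂ z A) := by
  classical
  haveI : Nonempty V₁ := ⟨x⟩
  haveI : Finite V₂ := Finite.intro e.toEquiv
  set O := oreGraph G₁ x y G₂ z A with hO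
  -- choose three distinct vertices of V₂ different from z
  have habc : ∃ a b c : V₂, a ≠ b ∧ a ≠ c ∧ b ≠ c ∧ a ≠ z ∧ b ≠ z ∧ c ≠ z := by
    have hcard : (Finset.univ \ ({e z} : Finset (Fin 4))).card = 3 := by
      rw [Finset.card_sdiff_of_subset (Finset.subset_univ _)]
      simp
    obtain ⟨a, b, c, hab, hac, hbc, hs⟩ := Finset.card_eq_three.mp hcard
    have hmem : ∀ u ∈ ({a, b, c} : Finset (Fin 4)), u ≠ e z := by
      intro u hu
      rw [← hs, Finset.mem_sdiff] at hu
      simpa using hu.2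
    exact ⟨e.symm a, e.symm b, e.symm c, iso_symm_ne' e hab, iso_symm_ne' e hac,
      iso_symm_ne' e hbc, iso_symm_ne e (hmem a (by simp)), iso_symm_ne e (hmem b (by simp)),
      iso_symm_ne e (hmem c (by simp))⟩
  obtain ⟨a, b, c, hab, hac, hbc, haz, hbz, hcz⟩ := habc
  set T : Set (V₁ ⊕ {v : V₂ // v ≠ z}) :=
    {Sum.inr ⟨a, haz⟩, Sum.inr ⟨b, hbz⟩, Sum.inr ⟨c, hcz⟩} with hT
  have hTshort : ShortCycleSet O T :=
    triangle_short (ore_adj_inr (top4_adj e hab)) (ore_adj_inr (top4_adj e hbc))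
      (ore_adj_inr (top4_adj e (Ne.symm hac)))
  rw [maxTri_eq_sSup, maxTri_eq_sSup]
  refine csSup_le_csSup_nat
    (Set.range (Sum.inr : {v : V₂ // v ≠ z} → V₁ ⊕ {v : V₂ // v ≠ z})).ncard
    (zero_mem_triSet _) ?_ ?_
  · -- forward
    rintro n ⟨C, rfl, hC, hdisj⟩
    set f : V₁ → V₁ ⊕ {v : V₂ // v ≠ z} := Sum.inl with hf
    have hinj : Set.InjOn f {v | v ≠ x} := fun u _ v _ huv => Sum.inl.inj huv
    have hadjf : ∀ u ∈ {v | v ≠ x}, ∀ v ∈ {v | v ≠ x}, G₁.Adj u v → O.Adj (f u) (f v) := by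
      intro u hu v hv huv
      exact ore_adj_inl huv (fun h => hu h.1) (fun h => hv h.2)
    set C₀ := C.filter (fun S => x ∉ S) with hC₀
    have hsub : ∀ S ∈ C₀, S ⊆ {v | v ≠ x} := by
      intro S hS v hv
      rw [hC₀, Finset.mem_filter] at hS
      exact fun hvx => hS.2 (hvx ▸ hv)
    obtain ⟨h1, h2, h3⟩ := mem_triSet_image hinj hadjf
      (fun S hS => hC S (Finset.mem_filter.mp hS).1) hsub
      (hdisj.mono (Finset.coe_subset.mpr (Finset.filter_subset _ C)))
    set D := C₀.image (Set.image f) with hD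
    have hTD : T ∉ D := by
      intro hTD
      rw [hD, Finset.mem_image] at hTD
      obtain ⟨S, hS, hST⟩ := hTD
      have : Sum.inr ⟨a, haz⟩ ∈ f '' S := by rw [hST, hT]; left; rfl
      obtain ⟨u, hu, hfu⟩ := this
      exact Sum.inl_ne_inr hfu
    have hdisjT : ∀ S ∈ D, Disjoint T S := by
      intro S hS
      rw [hD, Finset.mem_image] at hS
      obtain ⟨S₀, hS₀, rfl⟩ := hS
      rw [Set.disjoint_left]
      rintro v hv ⟨u, hu, rfl⟩
      rw [hT] at hv
      rcases hv with hv | hv | hv <;> simp [hf] at hv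
    refine ⟨(insert T D).card, ⟨insert T D, rfl, ?_, ?_⟩, ?_⟩
    · intro S hS
      rcases Finset.mem_insert.mp hS with rfl | hS
      · exact hTshort
      · exact h2 S hS
    · rw [Finset.coe_insert]
      exact Set.pairwise_insert_of_symmetric.mpr
        ⟨h3, fun S hS _ => hdisjT S hS⟩
    · rw [Finset.card_insert_of_notMem hTD, h1]
      have hsubf : C.filter (fun S => x ∈ S) ⊆
          C.filter (fun S => (S ∩ ({x} : Set V₁)).Nonempty) := by
        intro S hS
        rw [Finset.mem_filter] at hS ⊢
        exact ⟨hS.1, ⟨x, hS.2, rfl⟩⟩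
      have hcount := le_trans (Finset.card_le_card hsubf)
        (card_filter_inter_le hdisj ({x} : Set V₁) (Set.finite_singleton x))
      rw [Set.ncard_singleton] at hcount
      have hsum := Finset.card_filter_add_card_filter_not (s := C)
        (p := fun S => x ∈ S)
      omega
  · -- backward
    rintro n ⟨C, rfl, hC, hdisj⟩
    haveI : Nonempty (V₁ ⊕ {v : V₂ // v ≠ z}) := ⟨Sum.inl x⟩
    have ht : (Set.range (Sum.inr : {v : V₂ // v ≠ z} → V₁ ⊕ {v : V₂ // v ≠ z})).Finite :=
      Set.finite_range _
    set f' : V₁ ⊕ {v : V₂ // v ≠ z} → V₁ := Sum.elim id (fun _ => x) with hf'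
    set t := Set.range (Sum.inl : V₁ → V₁ ⊕ {v : V₂ // v ≠ z}) with htdef
    have hinj : Set.InjOn f' t := by
      rintro u ⟨v, rfl⟩ u' ⟨v', rfl⟩ hab
      simpa [hf'] using hab
    have hadjf : ∀ u ∈ t, ∀ u' ∈ t, O.Adj u u' → G₁.Adj (f' u) (f' u') := by
      rintro u ⟨v, rfl⟩ u' ⟨v', rfl⟩ hab
      simpa [hf'] using ore_adj_inl' hab
    set C₀ := C.filter (fun S => S ⊆ t) with hC₀
    obtain ⟨h1, h2, h3⟩ := mem_triSet_image hinj hadjf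
      (fun S hS => hC S (Finset.mem_filter.mp hS).1)
      (fun S hS => (Finset.mem_filter.mp hS).2)
      (hdisj.mono (Finset.coe_subset.mpr (Finset.filter_subset _ C)))
    refine ⟨C₀.card, ⟨C₀.image (Set.image f'), h1, h2, h3⟩, ?_⟩
    have hbad : C.filter (fun S => ¬ S ⊆ t) ⊆
        C.filter (fun S =>
          (S ∩ Set.range (Sum.inr : {v : V₂ // v ≠ z} → _)).Nonempty) := by
      intro S hS
      rw [Finset.mem_filter] at hS ⊢
      refine ⟨hS.1, ?_⟩
      obtain ⟨u, hu, hut⟩ := Set.not_subset.mp hS.2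
      cases u with
      | inl v => exact absurd ⟨v, rfl⟩ hut
      | inr w => exact ⟨Sum.inr w, hu, ⟨w, rfl⟩⟩
    have hb2 := card_filter_inter_le hdisj
      (Set.range (Sum.inr : {v : V₂ // v ≠ z} → _)) ht
    have hb3 := Finset.card_le_card hbad
    have hsum := Finset.card_filter_add_card_filter_not (s := C)
      (p := fun S => S ⊆ t)
    have hlink : C₀.card = (C.filter (fun S => S ⊆ t)).card := congrArg Finset.card hC₀
    omega

end OreMain
/-- If `H` is an Ore composition of `H₁` and `H₂` and one of `H₁`, `H₂` is isomorphic to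
`K₄`, then `T(H) ≥ T(H₁) + T(H₂) - 1`. -/
theorem ore_composition_K4_T_ge {V₁ V₂ V₃ : Type*} (H : SimpleGraph V₃)
    (H₁ : SimpleGraph V₁) (H₂ : SimpleGraph V₂) (h : IsOreComposition H H₁ H₂)
    (hK4 : Nonempty (H₁ ≃g (⊤ : SimpleGraph (Fin 4))) ∨
      Nonempty (H₂ ≃g (⊤ : SimpleGraph (Fin 4)))) :
    maxTri H₁ + maxTri H₂ ≤ maxTri H + 1 := by
  obtain ⟨x, y, z, A, hxy, hA1, hA2, ⟨eH⟩⟩ := h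
  rw [maxTri_eq_of_iso eH]
  rcases hK4 with he | he
  · obtain ⟨e⟩ := he
    rw [maxTri_eq_of_iso e, maxTri_top_fin4]
    have := maxTri_le_ore_split (G₂ := H₂) (z := z) (A := A) hxy e
    omega
  · obtain ⟨e⟩ := he
    rw [maxTri_eq_of_iso e, maxTri_top_fin4]
    have := maxTri_le_ore_edge (z := z) (A := A) hxy e
    omega
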